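/- Let Π = (Γ, δ) be a finite directed acyclic graph with edge labels in D = {−q+1,...,q−1} (q ≥ 2 fixed), and define the evaluation e(u) = q^{Σ_v δ(u,v)·e(v)} for each node u (so leaves evaluate to 1) and e(M) = Σ_u M(u)·e(u) for markings M : Γ → D. Then the following are equivalent: (i) e(u) ∈ {q^n : n ∈ ℕ} for every node u; (ii) Σ_v δ(u,v)·e(v) ≥ 0 for every node u; (iii) e(M) ∈ ℤ for every marking M. -/

import Mathlib

/-- for a finite dag with edge labels in `D = {-(q-1),…,q-1}`
and evaluation `e u = q ^ (∑ v, δ u v · e v)` (real powers), the three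
power-circuit conditions are equivalent. -/
theorem stmt_11 (q : ℕ) (hq : 2 ≤ q) (Γ : Type*) [Fintype Γ]
    (δ : Γ → Γ → ℤ) (hD : ∀ u v, |δ u v| ≤ (q : ℤ) - 1)
    (r : Γ → ℕ) (hacyc : ∀ u v, δ u v ≠ 0 → r v < r u)
    (e : Γ → ℝ)
    (he : ∀ u, e u = Real.rpow q (∑ v, (δ u v : ℝ) * e v)) :
    ((∀ u, ∃ n : ℕ, e u = (q : ℝ) ^ n) ↔
      (∀ u, 0 ≤ ∑ v, (δ u v : ℝ) * e v)) ∧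
    ((∀ u, 0 ≤ ∑ v, (δ u v : ℝ) * e v) ↔
      (∀ M : Γ → ℤ, (∀ u, |M u| ≤ (q : ℤ) - 1) →
        ∃ z : ℤ, (∑ u, (M u : ℝ) * e u) = z)) := by
  classical
  have hq1 : (1 : ℝ) < (q : ℝ) := by exact_mod_cast (by omega : 1 < q)
  simp only [Real.rpow_eq_pow] at he
  have hq0 : (0 : ℝ) < (q : ℝ) := by linarith
  have hpos : ∀ u, 0 < e u := fun u => by
    rw [he u]; exact Real.rpow_pos_of_pos hq0 _
  -- (ii) → (i)
  have h21 : (∀ u, 0 ≤ ∑ v, (δ u v : ℝ) * e v) → ∀ u, ∃ n : ℕ, e u = (q : ℝ) ^ n := by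
    intro hnn
    have main : ∀ N u, r u < N → ∃ n : ℕ, e u = (q : ℝ) ^ n := by
      intro N
      induction N with
      | zero => intro u h; omega
      | succ N ih =>
        intro u hu
        have hz : ∃ z : ℤ, (∑ v, (δ u v : ℝ) * e v) = (z : ℝ) := by
          have hterm : ∀ v, ∃ z : ℤ, (δ u v : ℝ) * e v = (z : ℝ) := by
            intro v
            by_cases hvz : δ u v = 0
            · exact ⟨0, by simp [hvz]⟩
            · obtain ⟨n, hn⟩ := ih v (by have := hacyc u v hvz; omega)
              exact ⟨δ u v * (q : ℤ) ^ n, by rw [hn]; push_cast; ring⟩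
          choose f hf using hterm
          refine ⟨∑ v, f v, ?_⟩
          rw [Finset.sum_congr rfl fun v _ => hf v]
          push_cast; rfl
        obtain ⟨z, hz⟩ := hz
        have hz0 : 0 ≤ z := by
          have := hnn u
          rw [hz] at this
          exact_mod_cast this
        obtain ⟨n, rfl⟩ := Int.eq_ofNat_of_zero_le hz0
        refine ⟨n, ?_⟩
        rw [he u, hz]
        rw [show (((n : ℤ) : ℝ)) = (n : ℝ) by push_cast; rfl]
        exact Real.rpow_natCast _ n
    exact fun u => main (r u + 1) u (by omega)
  -- (i) → (ii)
  have h12 : (∀ u, ∃ n : ℕ, e u = (q : ℝ) ^ n) → ∀ u, 0 ≤ ∑ v, (δ u v : ℝ) * e v := by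
    intro h u
    obtain ⟨n, hn⟩ := h u
    have heq : (q : ℝ) ^ (∑ v, (δ u v : ℝ) * e v) = (q : ℝ) ^ (n : ℝ) := by
      rw [← he u, hn, Real.rpow_natCast]
    have h0 : (q : ℝ) ^ (0 : ℝ) ≤ (q : ℝ) ^ (∑ v, (δ u v : ℝ) * e v) := by
      rw [heq, Real.rpow_natCast, Real.rpow_zero]
      exact one_le_pow₀ hq1.le
    exact (Real.rpow_le_rpow_left_iff hq1).mp h0
  -- (ii) → (iii)
  have h23 : (∀ u, 0 ≤ ∑ v, (δ u v : ℝ) * e v) →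
      ∀ M : Γ → ℤ, (∀ u, |M u| ≤ (q : ℤ) - 1) →
        ∃ z : ℤ, (∑ u, (M u : ℝ) * e u) = (z : ℝ) := by
    intro h2 M _
    have h1 := h21 h2
    choose f hf using h1
    refine ⟨∑ u, M u * (q : ℤ) ^ f u, ?_⟩
    push_cast
    exact Finset.sum_congr rfl fun u _ => by rw [hf u]
  -- (iii) → (ii)
  have h32 : (∀ M : Γ → ℤ, (∀ u, |M u| ≤ (q : ℤ) - 1) →
      ∃ z : ℤ, (∑ u, (M u : ℝ) * e u) = (z : ℝ)) →
      ∀ u, 0 ≤ ∑ v, (δ u v : ℝ) * e v := by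
    intro h3 u
    -- e u is a positive integer, hence ≥ 1
    have hind : ∃ z : ℤ, e u = (z : ℝ) := by
      obtain ⟨z, hz⟩ := h3 (fun v => if v = u then 1 else 0)
        (fun v => by split <;> simp <;> omega)
      refine ⟨z, ?_⟩
      rw [← hz]
      rw [Finset.sum_eq_single u]
      · simp
      · intro b _ hb; simp [hb]
      · intro h; exact absurd (Finset.mem_univ u) h
    obtain ⟨z, hz⟩ := hind
    have hz1 : (1 : ℝ) ≤ e u := by
      have h0 : (0 : ℝ) < (z : ℝ) := hz ▸ hpos u
      have : 1 ≤ z := by exact_mod_cast h0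
      rw [hz]; exact_mod_cast this
    obtain ⟨w, hw⟩ := h3 (δ u) (hD u)
    have h0 : (q : ℝ) ^ (0 : ℝ) ≤ (q : ℝ) ^ (∑ v, (δ u v : ℝ) * e v) := by
      rw [Real.rpow_zero, ← he u]; exact hz1
    exact (Real.rpow_le_rpow_left_iff hq1).mp h0
  exact ⟨⟨h12, h21⟩, ⟨h23, h32⟩⟩
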